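/- Let F := X²Y + X + Z² + T³ ∈ ℂ[X, Y, Z, T] and A := ℂ[X, Y, Z, T]/(F), with x the image of X. For α ∈ ℂ, the quotient ℂ-algebra A/(x − α) is ℂ-isomorphic to the polynomial ring in 2 variables over ℂ if and only if α ≠ 0. -/

import Mathlib

open MvPolynomial

set_option maxHeartbeats 1000000 in
private lemma aux_notFS (P : Type) [CommRing P] [Algebra ℂ P]
    (x0 z t : P) (ev : P →ₐ[ℂ] Polynomial ℂ)
    (hx0 : ev x0 = 0) (hz : ev z = Polynomial.X) (ht : ev t = 0) :
    ¬ Algebra.FormallySmooth ℂ (P ⧸ Ideal.span {x0, z^2 + t^3}) := by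
  intro h
  set g : P := z^2 + t^3 with hg
  set I : Ideal P := Ideal.span {x0, g} with hI
  set J : Ideal (P ⧸ I^2) := I.map (Ideal.Quotient.mk (I^2)) with hJ
  have hJ2 : J ^ 2 = ⊥ := by
    rw [hJ, ← Ideal.map_pow, Ideal.map_quotient_self]
  have hle : I ^ 2 ≤ I := Ideal.pow_le_self two_ne_zero
  let e0 : ((P ⧸ I^2) ⧸ J) ≃ₐ[ℂ] P ⧸ I :=
    DoubleQuot.quotQuotEquivQuotOfLEₐ ℂ hle
  let g0 : (P ⧸ I) →ₐ[ℂ] ((P ⧸ I^2) ⧸ J) := e0.symm.toAlgHom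
  let σ : (P ⧸ I) →ₐ[ℂ] (P ⧸ I^2) := Algebra.FormallySmooth.lift J ⟨2, hJ2⟩ g0
  obtain ⟨q, hq⟩ := Ideal.Quotient.mk_surjective (σ (Ideal.Quotient.mk I z))
  obtain ⟨r, hr⟩ := Ideal.Quotient.mk_surjective (σ (Ideal.Quotient.mk I t))
  have hmk : ∀ p s : P, Ideal.Quotient.mk (I^2) s = σ (Ideal.Quotient.mk I p) →
      Ideal.Quotient.mk I s = Ideal.Quotient.mk I p := by
    intro p s hs
    have h1 : Ideal.Quotient.mk J (Ideal.Quotient.mk (I^2) s) = g0 (Ideal.Quotient.mk I p) := by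
      rw [hs]
      exact Algebra.FormallySmooth.mk_lift J ⟨2, hJ2⟩ g0 _
    have h2 := congrArg e0 h1
    have h3 : e0 (Ideal.Quotient.mk J (Ideal.Quotient.mk (I^2) s)) = Ideal.Quotient.mk I s := by
      rw [show ⇑e0 = ⇑(DoubleQuot.quotQuotEquivQuotOfLE hle) from
        DoubleQuot.coe_quotQuotEquivQuotOfLEₐ ℂ hle]
      exact DoubleQuot.quotQuotEquivQuotOfLE_quotQuotMk s hle
    have h4 : e0 (g0 (Ideal.Quotient.mk I p)) = Ideal.Quotient.mk I p :=
      e0.apply_symm_apply _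
    rw [h3, h4] at h2
    exact h2
  have hqX : q - z ∈ I := by
    rw [← Ideal.Quotient.eq]; exact hmk _ _ hq
  have hrX : r - t ∈ I := by
    rw [← Ideal.Quotient.eq]; exact hmk _ _ hr
  have hrel : q ^ 2 + r ^ 3 ∈ I ^ 2 := by
    have hg0 : Ideal.Quotient.mk I (z ^ 2 + t ^ 3) = 0 := by
      rw [Ideal.Quotient.eq_zero_iff_mem]
      exact Ideal.subset_span (by simp [hg])
    rw [← Ideal.Quotient.eq_zero_iff_mem]
    calc Ideal.Quotient.mk (I^2) (q ^ 2 + r ^ 3)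
        = σ (Ideal.Quotient.mk I z) ^ 2 + σ (Ideal.Quotient.mk I t) ^ 3 := by
          rw [map_add, map_pow, map_pow, hq, hr]
      _ = σ ((Ideal.Quotient.mk I z) ^ 2 + (Ideal.Quotient.mk I t) ^ 3) := by
          rw [map_add, map_pow, map_pow]
      _ = 0 := by rw [← map_pow, ← map_pow, ← map_add, hg0, map_zero]
  -- evaluation facts
  have hevI : ∀ p ∈ I, ∃ k : Polynomial ℂ, ev p = Polynomial.X ^ 2 * k := by
    intro p hp
    have hmem : ev p ∈ I.map ev.toRingHom := Ideal.mem_map_of_mem _ hp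
    rw [hI, Ideal.map_span] at hmem
    have himg : (⇑ev.toRingHom) '' {x0, g} ⊆ {(0 : Polynomial ℂ), Polynomial.X ^ 2} := by
      rintro _ ⟨y, (rfl | rfl), rfl⟩
      · left; simp [hx0]
      · right; simp [hg, hz, ht]
    have hle2 : Ideal.span ((⇑ev.toRingHom) '' {x0, g}) ≤
        Ideal.span {(0 : Polynomial ℂ), Polynomial.X ^ 2} := Ideal.span_mono himg
    have h0 : Ideal.span {(0 : Polynomial ℂ), Polynomial.X ^ 2} =
        Ideal.span {Polynomial.X ^ 2} := by
      rw [Ideal.span_insert, Ideal.span_singleton_eq_bot.2 rfl, bot_sup_eq]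
    have := hle2 hmem
    rw [h0, Ideal.mem_span_singleton] at this
    exact this
  have hevI2 : ∀ p ∈ I ^ 2, ∃ k : Polynomial ℂ, ev p = Polynomial.X ^ 4 * k := by
    intro p hp
    have hmem : ev p ∈ (I ^ 2).map ev.toRingHom := Ideal.mem_map_of_mem _ hp
    rw [Ideal.map_pow] at hmem
    have hImap : I.map ev.toRingHom ≤ Ideal.span {Polynomial.X ^ 2} := by
      rw [Ideal.map_le_iff_le_comap]
      intro u hu
      obtain ⟨k, hk⟩ := hevI u hu
      refine Ideal.mem_comap.2 ?_
      rw [show ev.toRingHom u = ev u from rfl, hk]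
      exact Ideal.mem_span_singleton.2 ⟨k, rfl⟩
    have : ev p ∈ (Ideal.span {Polynomial.X ^ 2}) ^ 2 := (Ideal.pow_right_mono hImap 2) hmem
    rw [Ideal.span_singleton_pow, ← pow_mul, Ideal.mem_span_singleton] at this
    exact this
  -- assemble polynomial identity
  obtain ⟨k, hk⟩ := hevI _ hqX
  obtain ⟨m, hm⟩ := hevI _ hrX
  obtain ⟨c, hc⟩ := hevI2 _ hrel
  have hq' : ev q = Polynomial.X + Polynomial.X ^ 2 * k := by
    have := map_sub ev q z
    rw [hk, hz] at this
    linear_combination -this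
  have hr' : ev r = Polynomial.X ^ 2 * m := by
    have := map_sub ev r t
    rw [hm, ht] at this
    linear_combination -this
  have key : (Polynomial.X + Polynomial.X ^ 2 * k) ^ 2 + (Polynomial.X ^ 2 * m) ^ 3
      = Polynomial.X ^ 4 * c := by
    rw [← hq', ← hr', ← map_pow, ← map_pow, ← map_add, hc]
  have key2 : Polynomial.X ^ 2 * (1 + 2 * (Polynomial.X * k) + Polynomial.X ^ 2 * k ^ 2
      + Polynomial.X ^ 4 * m ^ 3) = Polynomial.X ^ 2 * (Polynomial.X ^ 2 * c) := by
    linear_combination key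
  have key3 := mul_left_cancel₀ (pow_ne_zero 2 (Polynomial.X_ne_zero (R := ℂ))) key2
  have key4 := congrArg (Polynomial.eval 0) key3
  simp at key4


open MvPolynomial

-- reduction of the double quotient to a single quotient
set_option maxHeartbeats 1000000 in
private lemma aux_reduce (F : MvPolynomial (Fin 4) ℂ) (α : ℂ)
    (x : MvPolynomial (Fin 4) ℂ ⧸ Ideal.span {F})
    (hx : x = Ideal.Quotient.mk (Ideal.span {F}) (X 0)) :
    Nonempty (((MvPolynomial (Fin 4) ℂ ⧸ Ideal.span {F}) ⧸
        Ideal.span {x - algebraMap ℂ (MvPolynomial (Fin 4) ℂ ⧸ Ideal.span {F}) α})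
      ≃ₐ[ℂ] MvPolynomial (Fin 2) ℂ) ↔
    Nonempty ((MvPolynomial (Fin 4) ℂ ⧸ Ideal.span {F, X 0 - C α})
      ≃ₐ[ℂ] MvPolynomial (Fin 2) ℂ) := by
  have hIe : Ideal.span {x - algebraMap ℂ (MvPolynomial (Fin 4) ℂ ⧸ Ideal.span {F}) α} =
      Ideal.map (Ideal.Quotient.mkₐ ℂ (Ideal.span {F})) (Ideal.span {X 0 - C α}) := by
    rw [Ideal.map_span, Set.image_singleton]
    congr 1
    rw [hx, map_sub]
    congr 1
  have hsup : Ideal.span {F} ⊔ Ideal.span {X 0 - C α} = Ideal.span {F, X 0 - C α} := by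
    rw [← Ideal.span_union, Set.singleton_union]
  rw [hIe]
  constructor
  · rintro ⟨e⟩
    exact ⟨(Ideal.quotientEquivAlgOfEq ℂ hsup.symm).trans
      (((DoubleQuot.quotQuotEquivQuotSupₐ ℂ (Ideal.span {F}) (Ideal.span {X 0 - C α})).trans
        (Ideal.quotientEquivAlgOfEq ℂ rfl)).symm.trans e)⟩
  · rintro ⟨e⟩
    exact ⟨(DoubleQuot.quotQuotEquivQuotSupₐ ℂ (Ideal.span {F}) (Ideal.span {X 0 - C α})).trans
      ((Ideal.quotientEquivAlgOfEq ℂ hsup).trans e)⟩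



private lemma aux_span0 (α : ℂ) :
    (Ideal.span {(X 0)^2 * X 1 + X 0 + (X 2)^2 + (X 3)^3, X 0 - C α} :
      Ideal (MvPolynomial (Fin 4) ℂ)) =
    Ideal.span {X 0 - C α, (X 0)^2 * X 1 + X 0 + (X 2)^2 + (X 3)^3} := by
  rw [Ideal.span_pair_comm]

private lemma aux_span00 :
    (Ideal.span {(X 0)^2 * X 1 + X 0 + (X 2)^2 + (X 3)^3, X 0 - C 0} :
      Ideal (MvPolynomial (Fin 4) ℂ)) =
    Ideal.span {X 0, (X 2)^2 + (X 3)^3} := by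
  rw [C_0, sub_zero]
  apply le_antisymm <;> rw [Ideal.span_le] <;> rintro p hp <;>
    simp only [Set.mem_insert_iff, Set.mem_singleton_iff] at hp <;>
    rcases hp with rfl | rfl
  · exact Ideal.mem_span_pair.2 ⟨X 0 * X 1 + 1, 1, by ring⟩
  · exact Ideal.mem_span_pair.2 ⟨1, 0, by ring⟩
  · exact Ideal.mem_span_pair.2 ⟨0, 1, by ring⟩
  · exact Ideal.mem_span_pair.2 ⟨1, -(X 0 * X 1) - 1, by ring⟩

private noncomputable def phiQ (α : ℂ) : MvPolynomial (Fin 4) ℂ →ₐ[ℂ] MvPolynomial (Fin 2) ℂ :=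
  aeval ![C α, C α⁻¹ * C α⁻¹ * (- C α - (X 0)^2 - (X 1)^3), X 0, X 1]

set_option maxHeartbeats 1000000 in
private lemma aux_pos (α : ℂ) (hα : α ≠ 0) :
    Nonempty ((MvPolynomial (Fin 4) ℂ ⧸
        Ideal.span {(X 0 : MvPolynomial (Fin 4) ℂ)^2 * X 1 + X 0 + (X 2)^2 + (X 3)^3, X 0 - C α})
      ≃ₐ[ℂ] MvPolynomial (Fin 2) ℂ) := by
  set F : MvPolynomial (Fin 4) ℂ := (X 0)^2 * X 1 + X 0 + (X 2)^2 + (X 3)^3 with hF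
  set K : Ideal (MvPolynomial (Fin 4) ℂ) := Ideal.span {F, X 0 - C α} with hK
  have hCC : (C α : MvPolynomial (Fin 2) ℂ) * C α⁻¹ = 1 := by
    rw [← C_mul, mul_inv_cancel₀ hα, C_1]
  have hφF : phiQ α F = 0 := by
    simp only [hF, phiQ, map_add, map_mul, map_pow, map_sub, map_neg, aeval_X,
      Matrix.cons_val_zero, Matrix.cons_val_one, Matrix.head_cons,
      Matrix.cons_val_two, Matrix.vecTail, Matrix.cons_val_three, Matrix.vecHead,
      Matrix.cons_val_succ, Function.comp]
    linear_combination (- C α - (X 0 : MvPolynomial (Fin 2) ℂ)^2 - (X 1)^3) *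
      (C α * C α⁻¹ + 1) * hCC
  have hφX : phiQ α (X 0 - C α) = 0 := by
    simp only [phiQ, map_sub, aeval_X, Matrix.cons_val_zero, aeval_C, algebraMap_eq, sub_self]
  have hker : ∀ a ∈ K, phiQ α a = 0 := by
    intro a ha
    have : K ≤ RingHom.ker (phiQ α).toRingHom := by
      rw [hK, Ideal.span_le]
      rintro p hp
      simp only [Set.mem_insert_iff, Set.mem_singleton_iff] at hp
      rcases hp with rfl | rfl
      · exact hφF
      · exact hφX
    exact this ha
  let ψ : (MvPolynomial (Fin 4) ℂ ⧸ K) →ₐ[ℂ] MvPolynomial (Fin 2) ℂ :=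
    Ideal.Quotient.liftₐ K (phiQ α) hker
  let χ : MvPolynomial (Fin 2) ℂ →ₐ[ℂ] (MvPolynomial (Fin 4) ℂ ⧸ K) :=
    aeval ![Ideal.Quotient.mk K (X 2), Ideal.Quotient.mk K (X 3)]
  have hψmk : ∀ p : MvPolynomial (Fin 4) ℂ, ψ (Ideal.Quotient.mk K p) = phiQ α p := by
    intro p
    rw [show ψ (Ideal.Quotient.mk K p) = Ideal.Quotient.liftₐ K (phiQ α) hker
      (Ideal.Quotient.mk K p) from rfl]
    rfl
  -- facts in the quotient
  have hA : Ideal.Quotient.mk K (X 0) = algebraMap ℂ _ α := by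
    have h1 : Ideal.Quotient.mk K (X 0 - C α) = 0 :=
      Ideal.Quotient.eq_zero_iff_mem.2 (Ideal.subset_span (by simp))
    rw [map_sub, sub_eq_zero] at h1
    rw [h1]
    exact (Ideal.Quotient.mkₐ ℂ K).commutes α
  have hrel : (algebraMap ℂ (MvPolynomial (Fin 4) ℂ ⧸ K) α)^2 * Ideal.Quotient.mk K (X 1)
      + algebraMap ℂ _ α + (Ideal.Quotient.mk K (X 2))^2 + (Ideal.Quotient.mk K (X 3))^3 = 0 := by
    have h1 : Ideal.Quotient.mk K F = 0 :=
      Ideal.Quotient.eq_zero_iff_mem.2 (Ideal.subset_span (by simp))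
    rw [hF] at h1
    simp only [map_add, map_mul, map_pow] at h1
    rw [hA] at h1
    exact h1
  have hu : algebraMap ℂ (MvPolynomial (Fin 4) ℂ ⧸ K) α⁻¹ * algebraMap ℂ _ α = 1 := by
    rw [← map_mul, inv_mul_cancel₀ hα, map_one]
  have hχ0 : χ (X 0) = Ideal.Quotient.mk K (X 2) := by simp [χ]
  have hχ1 : χ (X 1) = Ideal.Quotient.mk K (X 3) := by simp [χ]
  have hψχ : ψ.comp χ = AlgHom.id ℂ _ := by
    apply MvPolynomial.algHom_ext
    intro i
    fin_cases i
    · show ψ (χ (X 0)) = X 0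
      rw [hχ0, hψmk]
      simp [phiQ, Matrix.cons_val_two, Matrix.cons_val_three, Matrix.vecTail, Matrix.vecHead,
        Matrix.cons_val_succ, Function.comp]
    · show ψ (χ (X 1)) = X 1
      rw [hχ1, hψmk]
      simp [phiQ, Matrix.cons_val_two, Matrix.cons_val_three, Matrix.vecTail, Matrix.vecHead,
        Matrix.cons_val_succ, Function.comp]
  have hχψ : χ.comp ψ = AlgHom.id ℂ _ := by
    apply Ideal.Quotient.algHom_ext
    apply MvPolynomial.algHom_ext
    intro i
    have hbase : ∀ p : MvPolynomial (Fin 4) ℂ,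
        (χ.comp ψ).comp (Ideal.Quotient.mkₐ ℂ K) p = χ (phiQ α p) := by
      intro p
      simp only [AlgHom.comp_apply, Ideal.Quotient.mkₐ_eq_mk, hψmk]
    rw [hbase]
    simp only [AlgHom.comp_apply, AlgHom.id_apply, Ideal.Quotient.mkₐ_eq_mk]
    have h0 : phiQ α (X 0) = C α := by simp [phiQ]
    have h1 : phiQ α (X 1) = C α⁻¹ * C α⁻¹ * (- C α - (X 0)^2 - (X 1)^3) := by simp [phiQ]
    have h2 : phiQ α (X 2) = X 0 := by
      simp [phiQ, Matrix.cons_val_two, Matrix.vecTail, Matrix.vecHead, Matrix.cons_val_succ,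
        Function.comp]
    have h3 : phiQ α (X 3) = X 1 := by
      simp [phiQ, Matrix.cons_val_three, Matrix.vecTail, Matrix.vecHead, Matrix.cons_val_succ,
        Function.comp]
    fin_cases i
    · show χ (phiQ α (X 0)) = Ideal.Quotient.mk K (X 0)
      rw [h0, show (χ (C α)) = algebraMap ℂ _ α from aeval_C _ _, hA]
    · show χ (phiQ α (X 1)) = Ideal.Quotient.mk K (X 1)
      rw [h1]
      simp only [map_mul, map_sub, map_neg, map_pow]
      rw [show (χ (C α⁻¹)) = algebraMap ℂ _ α⁻¹ from aeval_C _ _,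
        show (χ (C α)) = algebraMap ℂ _ α from aeval_C _ _, hχ0, hχ1]
      linear_combination (-(algebraMap ℂ (MvPolynomial (Fin 4) ℂ ⧸ K) α⁻¹ *
          algebraMap ℂ (MvPolynomial (Fin 4) ℂ ⧸ K) α⁻¹)) * hrel +
        ((algebraMap ℂ (MvPolynomial (Fin 4) ℂ ⧸ K) α⁻¹) *
          algebraMap ℂ (MvPolynomial (Fin 4) ℂ ⧸ K) α + 1) *
          (Ideal.Quotient.mk K (X 1)) * hu
    · show χ (phiQ α (X 2)) = Ideal.Quotient.mk K (X 2)
      rw [h2, hχ0]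
    · show χ (phiQ α (X 3)) = Ideal.Quotient.mk K (X 3)
      rw [h3, hχ1]
  exact ⟨AlgEquiv.ofAlgHom ψ χ hψχ hχψ⟩

open MvPolynomial in
theorem statement14
    (F : MvPolynomial (Fin 4) ℂ)
    (hF : F = (X 0) ^ 2 * X 1 + X 0 + (X 2) ^ 2 + (X 3) ^ 3)
    (x : MvPolynomial (Fin 4) ℂ ⧸ Ideal.span {F})
    (hx : x = Ideal.Quotient.mk (Ideal.span {F}) (X 0))
    (α : ℂ) :
    Nonempty (((MvPolynomial (Fin 4) ℂ ⧸ Ideal.span {F}) ⧸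
        Ideal.span {x - algebraMap ℂ (MvPolynomial (Fin 4) ℂ ⧸ Ideal.span {F}) α})
      ≃ₐ[ℂ] MvPolynomial (Fin 2) ℂ) ↔ α ≠ 0 := by
  subst hF
  rw [aux_reduce _ α x hx]
  constructor
  · intro hn hα0
    subst hα0
    rw [aux_span00] at hn
    obtain ⟨e⟩ := hn
    have hs : Algebra.FormallySmooth ℂ (MvPolynomial (Fin 4) ℂ ⧸
        Ideal.span {(X 0 : MvPolynomial (Fin 4) ℂ), (X 2)^2 + (X 3)^3}) :=
      Algebra.FormallySmooth.of_equiv e.symm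
    exact aux_notFS (MvPolynomial (Fin 4) ℂ) (X 0) (X 2) (X 3)
      (aeval (fun k : Fin 4 => if k = 2 then (Polynomial.X : Polynomial ℂ) else 0))
      (by simp) (by simp) (by simp) hs
  · intro hα
    exact aux_pos α hα
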